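/- Let N ≥ 1 and let K : ℝ×ℝ → ℝ be measurable such that ∫∫ |λ|^a |μ|^b |K(λ,μ)| dλ dμ < ∞ for all 0 ≤ a, b ≤ N−1. Then (1/N!) ∫_{ℝ^N}∫_{ℝ^N} Δ(λ_1,…,λ_N) Δ(μ_1,…,μ_N) ∏_{k=1}^N K(λ_k,μ_k) dλ dμ = det( M_{ij} )_{i,j=1,…,N}, where M_{ij} := ∫∫ λ^{i−1} μ^{j−1} K(λ,μ) dλ dμ. (This is the determinant evaluation of the two-matrix and multi-matrix model eigenvalue integrals.) -/

import Mathlib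

open MeasureTheory

/-- The Vandermonde product `Δ(l₁,…,l_N) = ∏_{j<i} (l_i − l_j)`. -/
noncomputable def vdm {N : ℕ} (l : Fin N → ℝ) : ℝ :=
  ∏ i : Fin N, ∏ j ∈ Finset.Ioi i, (l j - l i)

lemma vdm_eq_sum {N : ℕ} (l : Fin N → ℝ) :
    vdm l = ∑ σ : Equiv.Perm (Fin N),
      ((Equiv.Perm.sign σ : ℤ) : ℝ) * ∏ i : Fin N, l i ^ (σ i : ℕ) := by
  have h : vdm l = (Matrix.vandermonde l).det := (Matrix.det_vandermonde l).symm
  rw [h, ← Matrix.det_transpose, Matrix.det_apply]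
  simp [Matrix.vandermonde, Units.smul_def, zsmul_eq_mul]

theorem stmt0 (N : ℕ) (hN : 1 ≤ N) (K : ℝ × ℝ → ℝ) (hK : Measurable K)
    (hint : ∀ a b : ℕ, a ≤ N - 1 → b ≤ N - 1 →
      Integrable (fun p : ℝ × ℝ => |p.1| ^ a * |p.2| ^ b * |K p|)) :
    (1 / (N.factorial : ℝ)) *
        ∫ lam : Fin N → ℝ, ∫ mu : Fin N → ℝ,
          vdm lam * vdm mu * ∏ k : Fin N, K (lam k, mu k) =
      Matrix.det (Matrix.of fun i j : Fin N =>
        ∫ p : ℝ × ℝ, p.1 ^ (i : ℕ) * p.2 ^ (j : ℕ) * K p) := by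
  classical
  set S : Matrix (Fin N) (Fin N) ℝ :=
    Matrix.of (fun i j : Fin N => ∫ p : ℝ × ℝ, p.1 ^ (i : ℕ) * p.2 ^ (j : ℕ) * K p) with hS
  set F : Fin N → Fin N → ℝ × ℝ → ℝ :=
    fun a b p => p.1 ^ (a : ℕ) * p.2 ^ (b : ℕ) * K p with hFdef
  set c : Equiv.Perm (Fin N) → Equiv.Perm (Fin N) → ℝ :=
    fun σ τ => ((Equiv.Perm.sign σ : ℤ) : ℝ) * ((Equiv.Perm.sign τ : ℤ) : ℝ) with hcdef
  -- integrability of the building blocks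
  have hF : ∀ a b : Fin N, Integrable (F a b) := by
    intro a b
    refine (hint a b (Nat.le_pred_of_lt a.isLt) (Nat.le_pred_of_lt b.isLt)).mono'
      ((((measurable_fst.pow_const _).mul (measurable_snd.pow_const _)).mul
        hK).aestronglyMeasurable) ?_
    filter_upwards with p
    simp [hFdef, abs_mul, abs_pow]
  -- pointwise expansion of the integrand
  have hexp : ∀ (lam mu : Fin N → ℝ),
      vdm lam * vdm mu * ∏ k : Fin N, K (lam k, mu k) =
      ∑ σ : Equiv.Perm (Fin N), ∑ τ : Equiv.Perm (Fin N),
        c σ τ * ∏ k : Fin N, F (σ k) (τ k) (lam k, mu k) := by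
    intro lam mu
    rw [vdm_eq_sum lam, vdm_eq_sum mu, Finset.sum_mul_sum, Finset.sum_mul]
    refine Finset.sum_congr rfl fun σ _ => ?_
    rw [Finset.sum_mul]
    refine Finset.sum_congr rfl fun τ _ => ?_
    simp only [hFdef, hcdef, Finset.prod_mul_distrib]
    ring
  -- integrability of each term on the pi space
  have hterm : ∀ σ τ : Equiv.Perm (Fin N),
      Integrable (fun x : Fin N → ℝ × ℝ => ∏ k : Fin N, F (σ k) (τ k) (x k)) :=
    fun σ τ => Integrable.fintype_prod (f := fun k => F (σ k) (τ k)) (fun k => hF _ _)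
  have hmp := MeasureTheory.volume_measurePreserving_arrowProdEquivProdArrow ℝ ℝ (Fin N)
  set e := MeasurableEquiv.arrowProdEquivProdArrow ℝ ℝ (Fin N) with hedef
  set G : (Fin N → ℝ) × (Fin N → ℝ) → ℝ :=
    fun q => vdm q.1 * vdm q.2 * ∏ k : Fin N, K (q.1 k, q.2 k) with hGdef
  have hGe : (fun x : Fin N → ℝ × ℝ => G (e x)) =
      fun x : Fin N → ℝ × ℝ => ∑ σ : Equiv.Perm (Fin N), ∑ τ : Equiv.Perm (Fin N),
        c σ τ * ∏ k : Fin N, F (σ k) (τ k) (x k) := by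
    funext x
    exact hexp (fun k => (x k).1) (fun k => (x k).2)
  -- integrability of G
  have hG : Integrable G := by
    rw [← hmp.integrable_comp_emb e.measurableEmbedding]
    have : (G ∘ e) = fun x : Fin N → ℝ × ℝ => ∑ σ : Equiv.Perm (Fin N),
        ∑ τ : Equiv.Perm (Fin N), c σ τ * ∏ k : Fin N, F (σ k) (τ k) (x k) := hGe
    rw [this]
    exact integrable_finset_sum _ fun σ _ =>
      integrable_finset_sum _ fun τ _ => ((hterm σ τ).const_mul _)
  -- compute the integral
  have key : (∫ lam : Fin N → ℝ, ∫ mu : Fin N → ℝ,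
        vdm lam * vdm mu * ∏ k : Fin N, K (lam k, mu k)) =
      ∑ σ : Equiv.Perm (Fin N), ∑ τ : Equiv.Perm (Fin N),
        c σ τ * ∏ k : Fin N, S (σ k) (τ k) := by
    have h1 : (∫ lam : Fin N → ℝ, ∫ mu : Fin N → ℝ,
        vdm lam * vdm mu * ∏ k : Fin N, K (lam k, mu k)) = ∫ q, G q := by
      rw [Measure.volume_eq_prod] at hG ⊢
      exact MeasureTheory.integral_integral hG
    rw [h1, ← hmp.integral_comp' G, hGe]
    rw [integral_finset_sum _ fun σ _ =>
      integrable_finset_sum _ fun τ _ => ((hterm σ τ).const_mul _)]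
    refine Finset.sum_congr rfl fun σ _ => ?_
    rw [integral_finset_sum _ fun τ _ => ((hterm σ τ).const_mul _)]
    refine Finset.sum_congr rfl fun τ _ => ?_
    rw [MeasureTheory.integral_const_mul _ _, MeasureTheory.volume_pi,
      MeasureTheory.integral_fintype_prod_eq_prod (ι := Fin N) (fun k => F (σ k) (τ k))]
    rfl
  -- the permutation-sum algebra
  have halg : (∑ σ : Equiv.Perm (Fin N), ∑ τ : Equiv.Perm (Fin N),
      c σ τ * ∏ k : Fin N, S (σ k) (τ k)) = (N.factorial : ℝ) * S.det := by
    have hdet : ∀ σ : Equiv.Perm (Fin N),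
        (∑ τ : Equiv.Perm (Fin N), c σ τ * ∏ k : Fin N, S (σ k) (τ k)) = S.det := by
      intro σ
      rw [← Equiv.sum_comp (Equiv.mulRight σ)
        (fun τ => c σ τ * ∏ k : Fin N, S (σ k) (τ k)), ← Matrix.det_transpose S,
        Matrix.det_apply]
      refine Finset.sum_congr rfl fun ρ _ => ?_
      have h1 : ∏ k : Fin N, S (σ k) (ρ (σ k)) = ∏ j : Fin N, S j (ρ j) :=
        Equiv.prod_comp σ (fun j => S j (ρ j))
      have hsign : c σ (ρ * σ) = ((Equiv.Perm.sign ρ : ℤ) : ℝ) := by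
        rcases Int.units_eq_one_or (Equiv.Perm.sign σ) with h | h <;>
          simp [hcdef, Equiv.Perm.sign_mul, h]
      simp only [Equiv.coe_mulRight, Equiv.Perm.mul_apply, h1, hsign,
        Units.smul_def, zsmul_eq_mul, Matrix.transpose_apply]
    rw [Finset.sum_congr rfl fun σ _ => hdet σ, Finset.sum_const, Finset.card_univ,
      Fintype.card_perm, Fintype.card_fin, nsmul_eq_mul]
  rw [key, halg]
  have hne : (N.factorial : ℝ) ≠ 0 := Nat.cast_ne_zero.mpr N.factorial_ne_zero
  field_simp
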